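/- Fix integers N ≥ 3 and α ≥ 1 with αN > 1. Let V_N = {(x,y) ∈ ℤ² : 1 ≤ x ≤ y ≤ N−1} and define T : ℤ² → ℝ by T(x,y) = (N−y)x/(N²(αN−1)) − 1/(2N(αN−1)) if y = x, T(x,y) = (N−y)x/(N²(αN−1)) if y ≠ x with (x,y) ∈ V_N, extended symmetrically by T(x,y) = T(y,x) for x > y, and T(x,y) = 0 whenever x ∈ {0,N} or y ∈ {0,N}. Define the operator on V_N: for (x,y) ∈ V_N with y ≥ x+2, (L T)(x,y) = α[T(x−1,y) + T(x+1,y) + T(x,y−1) + T(x,y+1) − 4T(x,y)]; for y = x+1, (L T)(x,x+1) = α[T(x−1,x+1) + T(x,x+2)] + (α−1)[T(x,x) + T(x+1,x+1)] − (4α−2)T(x,x+1); for y = x, (L T)(x,x) = 2α[T(x−1,x) + T(x,x+1) − 2T(x,x)]. Then N²(L T)(x,y) = −1 if y = x+1 and N²(L T)(x,y) = 0 for every other (x,y) ∈ V_N. -/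

import Mathlib

/-- The explicit occupation-time function solves the discrete Poisson equation
N²ΔT = -1_{y=x+1} on the triangle V_N with absorption on the boundary. -/
theorem occupation_time_poisson (N α : ℕ) (hN : 3 ≤ N) (hα : 1 ≤ α) (hαN : 1 < α * N)
    (T : ℤ → ℤ → ℝ)
    (hTdiag : ∀ x : ℤ, 1 ≤ x → x ≤ (N : ℤ) - 1 →
      T x x = ((N : ℝ) - x) * x / ((N : ℝ) ^ 2 * ((α : ℝ) * N - 1))
        - 1 / (2 * (N : ℝ) * ((α : ℝ) * N - 1)))
    (hToff : ∀ x y : ℤ, 1 ≤ x → x ≤ y → y ≤ (N : ℤ) - 1 → x ≠ y →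
      T x y = ((N : ℝ) - y) * x / ((N : ℝ) ^ 2 * ((α : ℝ) * N - 1)))
    (hTsym : ∀ x y : ℤ, T x y = T y x)
    (hTbdry : ∀ x y : ℤ, (x = 0 ∨ x = (N : ℤ) ∨ y = 0 ∨ y = (N : ℤ)) → T x y = 0) :
    (∀ x y : ℤ, 1 ≤ x → x + 2 ≤ y → y ≤ (N : ℤ) - 1 →
      (N : ℝ) ^ 2 * ((α : ℝ) * (T (x - 1) y + T (x + 1) y + T x (y - 1) + T x (y + 1)
        - 4 * T x y)) = 0) ∧
    (∀ x : ℤ, 1 ≤ x → x + 1 ≤ (N : ℤ) - 1 →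
      (N : ℝ) ^ 2 * ((α : ℝ) * (T (x - 1) (x + 1) + T x (x + 2))
        + ((α : ℝ) - 1) * (T x x + T (x + 1) (x + 1))
        - (4 * (α : ℝ) - 2) * T x (x + 1)) = -1) ∧
    (∀ x : ℤ, 1 ≤ x → x ≤ (N : ℤ) - 1 →
      (N : ℝ) ^ 2 * (2 * (α : ℝ) * (T (x - 1) x + T x (x + 1) - 2 * T x x)) = 0) := by
  have hN0 : (N : ℝ) ≠ 0 := by
    have : (0:ℝ) < N := by exact_mod_cast Nat.lt_of_lt_of_le (by norm_num) hN
    linarith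
  have hD : (α : ℝ) * N - 1 ≠ 0 := by
    have : (1:ℝ) < (α : ℝ) * N := by exact_mod_cast hαN
    linarith
  have hf : ∀ x y : ℤ, 0 ≤ x → x < y → y ≤ (N : ℤ) →
      T x y = ((N : ℝ) - y) * x / ((N : ℝ) ^ 2 * ((α : ℝ) * N - 1)) := by
    intro x y hx hlt hy
    rcases eq_or_lt_of_le hx with h0 | h1
    · rw [hTbdry x y (Or.inl h0.symm), ← h0]
      simp
    · rcases eq_or_lt_of_le hy with hy' | hy'
      · rw [hTbdry x y (Or.inr (Or.inr (Or.inr hy'))), hy']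
        push_cast
        ring
      · exact hToff x y (by omega) hlt.le (by omega) hlt.ne
  refine ⟨?_, ?_, ?_⟩
  · intro x y hx hxy hy
    rw [hf (x-1) y (by omega) (by omega) (by omega),
        hf (x+1) y (by omega) (by omega) (by omega),
        hf x (y-1) (by omega) (by omega) (by omega),
        hf x (y+1) (by omega) (by omega) (by omega),
        hf x y (by omega) (by omega) (by omega)]
    push_cast
    field_simp
    ring
  · intro x hx hxy
    rw [hf (x-1) (x+1) (by omega) (by omega) (by omega),
        hf x (x+2) (by omega) (by omega) (by omega),
        hTdiag x hx (by omega),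
        hTdiag (x+1) (by omega) (by omega),
        hf x (x+1) (by omega) (by omega) (by omega)]
    push_cast
    field_simp
    ring_nf
    have hD' : (-1 + (α:ℝ) * N) ≠ 0 := by
      intro h; apply hD; linarith
    field_simp
    ring
  · intro x hx hxN
    rw [hf (x-1) x (by omega) (by omega) (by omega),
        hf x (x+1) (by omega) (by omega) (by omega),
        hTdiag x hx hxN]
    push_cast
    field_simp
    ring
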